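/- Dyadic cube decomposition of a very well shaped set, cardinality bound: let m ≥ 1, let Ω ⊆ 𝕋_m be very well shaped with constant C, and fix γ ∈ 𝕋_m. For a positive integer k let C(k) be the set of cubes of the form ∏_{j=1}^m [γ_j + u_j/k, γ_j + (u_j+1)/k] (taken modulo 1, u ∈ ℤ^m) that are contained in Ω; let B_1 = C(2) and, for i ≥ 2, let B_i be the set of cubes in C(2^i) not contained in any cube of C(2^{i−1}). Then #B_i ≤ c (1 + μ(Ω)^{(m−1)/m} 2^{i(m−1)}) for all i ≥ 1, where c depends only on m and C. -/

import Mathlib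

open MeasureTheory

noncomputable section

abbrev Torus (m : ℕ) : Type := Fin m → AddCircle (1 : ℝ)

noncomputable def tmeas {m : ℕ} (Ω : Set (Torus m)) : ℝ := (volume Ω).toReal

noncomputable def torusDist {m : ℕ} (u w : Torus m) : ℝ :=
  Real.sqrt (∑ i, dist (u i) (w i) ^ 2)

noncomputable def torusDistSet {m : ℕ} (u : Torus m) (Ω : Set (Torus m)) : ℝ :=
  ⨅ w : Ω, torusDist u (w : Torus m)

def outerShell {m : ℕ} (Ω : Set (Torus m)) (ε : ℝ) : Set (Torus m) :=
  {u | u ∉ Ω ∧ torusDistSet u Ω < ε}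

def innerShell {m : ℕ} (Ω : Set (Torus m)) (ε : ℝ) : Set (Torus m) :=
  {u | u ∈ Ω ∧ torusDistSet u Ωᶜ < ε}

def IsWellShaped {m : ℕ} (Ω : Set (Torus m)) (C : ℝ) : Prop :=
  ∀ ε : ℝ, 0 < ε →
    tmeas (outerShell Ω ε) ≤ C * ε ∧ tmeas (innerShell Ω ε) ≤ C * ε

def IsVeryWellShaped {m : ℕ} (Ω : Set (Torus m)) (C : ℝ) : Prop :=
  ∀ ε : ℝ, 0 < ε →
    tmeas (outerShell Ω ε) ≤ C * (tmeas Ω ^ (1 - 1 / (m : ℝ)) * ε + ε ^ m) ∧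
    tmeas (innerShell Ω ε) ≤ C * (tmeas Ω ^ (1 - 1 / (m : ℝ)) * ε + ε ^ m)

noncomputable def discrepancy {ι : Type*} {n : ℕ} (s : Set ι) (ξ : ι → Fin n → ℝ) : ℝ :=
  if s.ncard = 0 then 1
  else
    ⨆ B : {B : (Fin n → ℝ) × (Fin n → ℝ) // ∀ j, 0 ≤ B.1 j ∧ B.1 j ≤ B.2 j ∧ B.2 j ≤ 1},
      |((s ∩ {k | ∀ j, B.val.1 j ≤ ξ k j ∧ ξ k j < B.val.2 j}).ncard : ℝ) / (s.ncard : ℝ)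
        - ∏ j, (B.val.2 j - B.val.1 j)|

noncomputable def torusPt (p : ℕ) {m : ℕ} (x : Fin m → Fin p) : Torus m :=
  fun i => ((((x i : ℕ) : ℝ) / (p : ℝ) : ℝ) : AddCircle (1 : ℝ))

noncomputable def fracPt {p m n : ℕ} (G : Fin n → MvPolynomial (Fin m) (ZMod p))
    (x : Fin m → ℤ) : Fin n → ℝ :=
  fun j => ((MvPolynomial.eval (fun i => ((x i : ℤ) : ZMod p)) (G j)).val : ℝ) / (p : ℝ)

def Degree2Independent {p m n : ℕ} (G : Fin n → MvPolynomial (Fin m) (ZMod p)) : Prop :=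
  ∀ a : Fin n → ZMod p, a ≠ 0 → 2 ≤ (∑ j, a j • G j).totalDegree

def torusIcc (a b : ℝ) : Set (AddCircle (1 : ℝ)) :=
  (fun r : ℝ => (r : AddCircle (1 : ℝ))) '' Set.Icc a b

def gridCube {m : ℕ} (γ : Fin m → ℝ) (k : ℕ) (u : Fin m → ℤ) : Set (Torus m) :=
  {t | ∀ i, t i ∈ torusIcc (γ i + (u i : ℝ) / k) (γ i + ((u i : ℝ) + 1) / k)}

def torusCube {m : ℕ} (γ : Fin m → ℝ) (s : ℝ) : Set (Torus m) :=
  {t | ∀ i, t i ∈ torusIcc (γ i) (γ i + s)}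

def cubesIn {m : ℕ} (Ω : Set (Torus m)) (γ : Fin m → ℝ) (k : ℕ) : Set (Set (Torus m)) :=
  {Γ | (∃ u : Fin m → ℤ, Γ = gridCube γ k u) ∧ Γ ⊆ Ω}

def dyadicB {m : ℕ} (Ω : Set (Torus m)) (γ : Fin m → ℝ) (i : ℕ) : Set (Set (Torus m)) :=
  if i = 1 then cubesIn Ω γ 2
  else {Γ | Γ ∈ cubesIn Ω γ (2 ^ i) ∧ ∀ Γ' ∈ cubesIn Ω γ (2 ^ (i - 1)), ¬ Γ ⊆ Γ'}

def polySolutions (p : ℕ) {m n : ℕ} (F : Fin n → MvPolynomial (Fin m) ℤ) :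
    Set (Fin m → Fin p) :=
  {x | ∀ j, ((MvPolynomial.eval (fun i => ((x i : ℕ) : ℤ)) (F j) : ℤ) : ZMod p) = 0}

noncomputable def Tcount (p : ℕ) {m n : ℕ} (F : Fin n → MvPolynomial (Fin m) ℤ)
    (S : Set (Torus m)) : ℕ :=
  (polySolutions p F ∩ {x | torusPt p x ∈ S}).ncard

end
lemma coe_sub_int (x : ℝ) (n : ℤ) : ((x - n : ℝ) : AddCircle (1:ℝ)) = (x : AddCircle (1:ℝ)) := by
  rw [QuotientAddGroup.eq_iff_sub_mem]
  refine AddSubgroup.mem_zmultiples_iff.mpr ⟨-n, by simp⟩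

lemma torusIcc_shift (a b : ℝ) (n : ℤ) : torusIcc (a + n) (b + n) = torusIcc a b := by
  ext u
  constructor
  · rintro ⟨r, hr, rfl⟩
    exact ⟨r - n, ⟨by linarith [hr.1], by linarith [hr.2]⟩, coe_sub_int r n⟩
  · rintro ⟨r, hr, rfl⟩
    refine ⟨r + n, ⟨by linarith [hr.1], by linarith [hr.2]⟩, ?_⟩
    simpa using coe_sub_int (r + n) n

lemma torusIcc_mono {a b a' b' : ℝ} (h1 : a' ≤ a) (h2 : b ≤ b') :
    torusIcc a b ⊆ torusIcc a' b' := Set.image_mono (Set.Icc_subset_Icc h1 h2)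

lemma dist_coe_le (x y : ℝ) : dist ((x:ℝ) : AddCircle (1:ℝ)) ((y:ℝ) : AddCircle (1:ℝ)) ≤ |x - y| := by
  rw [dist_eq_norm, ← QuotientAddGroup.mk_sub]
  exact (Real.norm_eq_abs (x - y)) ▸ (QuotientAddGroup.norm_mk_le_norm : ‖((x - y : ℝ) : AddCircle (1:ℝ))‖ ≤ ‖x - y‖)

lemma torusIcc_eq_closedBall {a b : ℝ} (hab : a ≤ b) :
    torusIcc a b = Metric.closedBall ((((a+b)/2 : ℝ)) : AddCircle (1:ℝ)) ((b-a)/2) := by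
  ext u
  constructor
  · rintro ⟨r, hr, rfl⟩
    rw [Metric.mem_closedBall]
    calc dist ((r:ℝ) : AddCircle (1:ℝ)) _ ≤ |r - (a+b)/2| := dist_coe_le _ _
      _ ≤ (b-a)/2 := abs_le.mpr ⟨by linarith [hr.1], by linarith [hr.2]⟩
  · intro hu
    obtain ⟨y, rfl⟩ := QuotientAddGroup.mk_surjective u
    have : y ∈ ((↑) ⁻¹' Metric.closedBall (((a+b)/2 : ℝ) : AddCircle (1:ℝ)) ((b-a)/2)) := hu
    rw [AddCircle.coe_real_preimage_closedBall_eq_iUnion] at this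
    obtain ⟨z, hz⟩ := Set.mem_iUnion.mp this
    rw [Metric.mem_closedBall, Real.dist_eq] at hz
    rw [abs_le] at hz
    simp only [zsmul_eq_mul, mul_one] at hz
    refine ⟨y - z, ⟨by push_cast at hz ⊢; linarith [hz.1], by push_cast at hz ⊢; linarith [hz.2]⟩, coe_sub_int y z⟩

lemma volume_torusIcc {a b : ℝ} (hab : a ≤ b) (hb : b - a ≤ 1) :
    volume (torusIcc a b) = ENNReal.ofReal (b - a) := by
  rw [torusIcc_eq_closedBall hab, AddCircle.volume_closedBall]
  rw [min_eq_right (by linarith)]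
  congr 1; ring

lemma measurableSet_torusIcc (a b : ℝ) : MeasurableSet (torusIcc a b) := by
  refine (IsCompact.isClosed ?_).measurableSet
  exact (isCompact_Icc).image (AddCircle.continuous_mk' 1)

lemma volume_singleton (x : AddCircle (1:ℝ)) : volume ({x} : Set (AddCircle (1:ℝ))) = 0 := by
  have h := AddCircle.volume_closedBall (T := 1) (x := x) 0
  have : ({x} : Set (AddCircle (1:ℝ))) ⊆ Metric.closedBall x 0 := by
    intro y hy; simp [hy]
  refine le_antisymm ?_ zero_le
  calc volume ({x} : Set (AddCircle (1:ℝ))) ≤ _ := measure_mono this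
    _ = 0 := by rw [h]; simp

lemma gridCube_eq_pi {m : ℕ} (γ : Fin m → ℝ) (k : ℕ) (u : Fin m → ℤ) :
    gridCube γ k u = Set.univ.pi (fun i => torusIcc (γ i + (u i : ℝ) / k) (γ i + ((u i : ℝ) + 1) / k)) := by
  ext t; simp [gridCube, Set.mem_pi]

lemma gridCube_congr {m : ℕ} (γ : Fin m → ℝ) {k : ℕ} (hk : 0 < k) {u v : Fin m → ℤ}
    (h : ∀ i, (k : ℤ) ∣ (u i - v i)) : gridCube γ k u = gridCube γ k v := by
  rw [gridCube_eq_pi, gridCube_eq_pi]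
  refine congrArg Set.univ.pi (funext fun i => ?_)
  obtain ⟨n, hn⟩ := h i
  have hk' : (k : ℝ) ≠ 0 := Nat.cast_ne_zero.mpr hk.ne'
  have h1 : (u i : ℝ) = (v i : ℝ) + k * n := by
    have := congrArg (fun z : ℤ => (z : ℝ)) hn
    push_cast at this
    linarith
  have e1 : γ i + (u i : ℝ) / k = (γ i + (v i : ℝ) / k) + n := by
    rw [h1]; field_simp; ring
  have e2 : γ i + ((u i : ℝ) + 1) / k = (γ i + ((v i : ℝ) + 1) / k) + n := by
    rw [h1]; field_simp; ring
  rw [e1, e2, torusIcc_shift]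

lemma volume_gridCube {m : ℕ} (γ : Fin m → ℝ) {k : ℕ} (hk : 1 ≤ k) (u : Fin m → ℤ) :
    volume (gridCube γ k u) = ENNReal.ofReal (((k : ℝ)⁻¹) ^ m) := by
  have hk0 : (0:ℝ) < k := by exact_mod_cast hk
  have hk1 : (1:ℝ) ≤ k := by exact_mod_cast hk
  rw [gridCube_eq_pi, MeasureTheory.volume_pi_pi]
  have key : ∀ i, volume (torusIcc (γ i + (u i : ℝ) / k) (γ i + ((u i : ℝ) + 1) / k))
      = ENNReal.ofReal ((k:ℝ)⁻¹) := by
    intro i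
    have hd : (γ i + ((u i:ℝ)+1)/k) - (γ i + (u i:ℝ)/k) = (k:ℝ)⁻¹ := by field_simp; ring
    have hinv : (0:ℝ) < (k:ℝ)⁻¹ := by positivity
    have hab : γ i + (u i:ℝ)/k ≤ γ i + ((u i:ℝ)+1)/k := by linarith
    rw [volume_torusIcc hab (by rw [hd]; exact inv_le_one_of_one_le₀ hk1), hd]
  simp_rw [key]
  rw [Finset.prod_const, Finset.card_univ, Fintype.card_fin, ← ENNReal.ofReal_pow (by positivity)]

lemma measurableSet_gridCube {m : ℕ} (γ : Fin m → ℝ) (k : ℕ) (u : Fin m → ℤ) :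
    MeasurableSet (gridCube γ k u) := by
  rw [gridCube_eq_pi]
  exact MeasurableSet.pi (Set.countable_univ) (fun i _ => measurableSet_torusIcc _ _)

lemma cubesIn_subset_range {m : ℕ} (Ω : Set (Torus m)) (γ : Fin m → ℝ) {k : ℕ} (hk : 0 < k) :
    cubesIn Ω γ k ⊆ Set.range (fun w : Fin m → ZMod k => gridCube γ k (fun i => ((w i).val : ℤ))) := by
  haveI : NeZero k := ⟨hk.ne'⟩
  rintro Γ ⟨⟨u, rfl⟩, -⟩
  refine ⟨fun i => (u i : ZMod k), ?_⟩
  refine gridCube_congr γ hk (fun i => ?_)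
  have : ((((((u i : ZMod k)).val : ℤ) - u i : ℤ)) : ZMod k) = 0 := by
    push_cast
    rw [ZMod.natCast_rightInverse (u i : ZMod k)]
    ring
  exact (ZMod.intCast_zmod_eq_zero_iff_dvd _ k).mp this

lemma cubesIn_finite {m : ℕ} (Ω : Set (Torus m)) (γ : Fin m → ℝ) {k : ℕ} (hk : 0 < k) :
    (cubesIn Ω γ k).Finite := by
  haveI : NeZero k := ⟨hk.ne'⟩
  exact (Set.finite_range _).subset (cubesIn_subset_range Ω γ hk)

lemma cubesIn_ncard_le {m : ℕ} (Ω : Set (Torus m)) (γ : Fin m → ℝ) {k : ℕ} (hk : 0 < k) :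
    (cubesIn Ω γ k).ncard ≤ k ^ m := by
  haveI : NeZero k := ⟨hk.ne'⟩
  calc (cubesIn Ω γ k).ncard ≤ (Set.range (fun w : Fin m → ZMod k => gridCube γ k (fun i => ((w i).val : ℤ)))).ncard :=
        Set.ncard_le_ncard (cubesIn_subset_range Ω γ hk) (Set.finite_range _)
    _ ≤ Fintype.card (Fin m → ZMod k) := by
        rw [← Set.image_univ]
        refine le_trans (Set.ncard_image_le Set.finite_univ) ?_
        rw [Set.ncard_univ, Nat.card_eq_fintype_card]
    _ = k ^ m := by simp [ZMod.card]

lemma torusIcc_inter_null {k : ℕ} (hk : 1 ≤ k) (g : ℝ) (p q : ℤ) (hpq : ¬ (k:ℤ) ∣ (p - q)) :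
    volume (torusIcc (g + (p:ℝ)/k) (g + ((p:ℝ)+1)/k) ∩ torusIcc (g + (q:ℝ)/k) (g + ((q:ℝ)+1)/k)) = 0 := by
  have hr : (0:ℝ) < k := by exact_mod_cast hk
  have hsub : torusIcc (g + (p:ℝ)/k) (g + ((p:ℝ)+1)/k) ∩ torusIcc (g + (q:ℝ)/k) (g + ((q:ℝ)+1)/k)
      ⊆ {((g + (p:ℝ)/k : ℝ) : AddCircle (1:ℝ)), ((g + ((p:ℝ)+1)/k : ℝ) : AddCircle (1:ℝ))} := by
    rintro x ⟨⟨s, hs, rfl⟩, ⟨t, ht, hst⟩⟩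
    obtain ⟨n, hn⟩ : ∃ n : ℤ, s - t = (n:ℝ) := by
      have := (QuotientAddGroup.eq_iff_sub_mem).mp hst.symm
      obtain ⟨n, hn⟩ := AddSubgroup.mem_zmultiples_iff.mp this
      exact ⟨n, by simpa using hn.symm⟩
    have hd1 : ((p:ℝ) - q - 1)/k ≤ s - t := by
      have e : (g + (p:ℝ)/k) - (g + ((q:ℝ)+1)/k) = ((p:ℝ)-q-1)/k := by ring
      linarith [hs.1, ht.2]
    have hd2 : s - t ≤ ((p:ℝ) - q + 1)/k := by
      have e : (g + ((p:ℝ)+1)/k) - (g + (q:ℝ)/k) = ((p:ℝ)-q+1)/k := by ring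
      linarith [hs.2, ht.1]
    have hb1 : (p - q - 1 : ℤ) ≤ k * n := by
      have : ((p:ℝ) - q - 1) ≤ k * n := by
        rw [hn] at hd1
        rw [mul_comm]
        exact (div_le_iff₀ hr).mp hd1
      exact_mod_cast this
    have hb2 : (k * n : ℤ) ≤ p - q + 1 := by
      have : (k:ℝ) * n ≤ (p:ℝ) - q + 1 := by
        rw [hn] at hd2
        rw [mul_comm]
        exact (le_div_iff₀ hr).mp hd2
      exact_mod_cast this
    have hne : (k * n : ℤ) ≠ p - q := fun h => hpq ⟨n, h.symm⟩
    have hcase : (k * n : ℤ) = p - q - 1 ∨ (k * n : ℤ) = p - q + 1 := by omega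
    simp only [Set.mem_insert_iff, Set.mem_singleton_iff]
    rcases hcase with h | h
    · -- s = g + p/k
      left
      have hkn : (k:ℝ) * n = (p:ℝ) - q - 1 := by exact_mod_cast h
      have hsval : s = g + (p:ℝ)/k := by
        have hd : s - t = ((p:ℝ) - q - 1)/k := by
          rw [hn]; field_simp; linarith [hkn]
        have key1 : (q:ℝ)/k + 1/k + ((p:ℝ) - q - 1)/k = (p:ℝ)/k := by ring
        have key2 : ((q:ℝ)+1)/k = (q:ℝ)/k + 1/k := by ring
        have := ht.2
        rw [key2] at this
        have hsle : s ≤ g + (p:ℝ)/k := by linarith [hd]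
        exact le_antisymm hsle hs.1
      exact congrArg _ hsval
    · -- s = g + (p+1)/k
      right
      have hkn : (k:ℝ) * n = (p:ℝ) - q + 1 := by exact_mod_cast h
      have hsval : s = g + ((p:ℝ)+1)/k := by
        have hd : s - t = ((p:ℝ) - q + 1)/k := by
          rw [hn]; field_simp; linarith [hkn]
        have key1 : (q:ℝ)/k + ((p:ℝ) - q + 1)/k = ((p:ℝ)+1)/k := by ring
        have hsge : g + ((p:ℝ)+1)/k ≤ s := by linarith [ht.1, hd]
        have key2 : ((p:ℝ)+1)/k = (p:ℝ)/k + 1/k := by ring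
        have := hs.2
        exact le_antisymm this hsge
      exact congrArg _ hsval
  refine le_antisymm ?_ zero_le
  calc volume _ ≤ volume ({((g + (p:ℝ)/k : ℝ) : AddCircle (1:ℝ))} ∪ {((g + ((p:ℝ)+1)/k : ℝ) : AddCircle (1:ℝ))}) := by
        refine measure_mono ?_
        rw [← Set.insert_eq]
        exact hsub
    _ ≤ volume ({((g + (p:ℝ)/k : ℝ) : AddCircle (1:ℝ))} : Set (AddCircle (1:ℝ)))
        + volume ({((g + ((p:ℝ)+1)/k : ℝ) : AddCircle (1:ℝ))} : Set (AddCircle (1:ℝ))) := measure_union_le _ _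
    _ = 0 := by rw [volume_singleton, volume_singleton, add_zero]

lemma gridCube_inter_null {m : ℕ} (γ : Fin m → ℝ) {k : ℕ} (hk : 1 ≤ k) (u v : Fin m → ℤ)
    (hne : gridCube γ k u ≠ gridCube γ k v) :
    volume (gridCube γ k u ∩ gridCube γ k v) = 0 := by
  obtain ⟨i0, hi0⟩ : ∃ i, ¬ (k:ℤ) ∣ (u i - v i) := by
    by_contra hcon
    push_neg at hcon
    exact hne (gridCube_congr γ (by omega) (by simpa using hcon))
  rw [gridCube_eq_pi, gridCube_eq_pi, ← Set.pi_inter_distrib, MeasureTheory.volume_pi_pi]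
  refine Finset.prod_eq_zero (Finset.mem_univ i0) ?_
  refine le_antisymm ?_ zero_le
  rw [← torusIcc_inter_null hk (γ i0) (u i0) (v i0) hi0]

lemma mem_torusIcc_dist_le {a b : ℝ} {x y : AddCircle (1:ℝ)} (hx : x ∈ torusIcc a b)
    (hy : y ∈ torusIcc a b) : dist x y ≤ b - a := by
  obtain ⟨s, hs, rfl⟩ := hx
  obtain ⟨t, ht, rfl⟩ := hy
  exact le_trans (dist_coe_le s t)
    (abs_le.mpr ⟨by linarith [hs.1, ht.2], by linarith [hs.2, ht.1]⟩)

lemma gridCube_subset_parent {m : ℕ} {i : ℕ} (hi : 1 ≤ i) (γ : Fin m → ℝ) (u : Fin m → ℤ) :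
    gridCube γ (2^i) u ⊆ gridCube γ (2^(i-1)) (fun j => u j / 2) := by
  have hpow : (2:ℝ)^i = 2^(i-1) * 2 := by
    rw [← pow_succ]
    congr 1
    omega
  have hp1 : (0:ℝ) < 2^(i-1) := by positivity
  have hp2 : (0:ℝ) < 2^i := by positivity
  intro t ht j
  have h1 : (2 * (u j / 2) : ℤ) ≤ u j := by omega
  have h2 : (u j : ℤ) ≤ 2 * (u j / 2) + 1 := by omega
  have h1' : 2 * ((u j / 2 : ℤ) : ℝ) ≤ (u j : ℝ) := by exact_mod_cast h1
  have h2' : (u j : ℝ) ≤ 2 * ((u j / 2 : ℤ) : ℝ) + 1 := by exact_mod_cast h2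
  have e1 : γ j + ((u j / 2 : ℤ) : ℝ) / ((2^(i-1) : ℕ) : ℝ) ≤ γ j + (u j : ℝ) / ((2^i : ℕ) : ℝ) := by
    push_cast
    have : ((u j / 2 : ℤ) : ℝ) / 2^(i-1) ≤ (u j : ℝ) / 2^i := by
      rw [div_le_div_iff₀ hp1 hp2, hpow]
      nlinarith [mul_nonneg (sub_nonneg.mpr h1') hp1.le]
    linarith
  have e2 : γ j + ((u j : ℝ) + 1) / ((2^i : ℕ) : ℝ) ≤ γ j + (((u j / 2 : ℤ) : ℝ) + 1) / ((2^(i-1) : ℕ) : ℝ) := by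
    push_cast
    have : ((u j : ℝ) + 1) / 2^i ≤ (((u j / 2 : ℤ) : ℝ) + 1) / 2^(i-1) := by
      rw [div_le_div_iff₀ hp2 hp1, hpow]
      nlinarith [mul_nonneg (sub_nonneg.mpr (by linarith : (u j:ℝ) + 1 ≤ 2 * (((u j / 2 : ℤ):ℝ) + 1))) hp1.le]
    linarith
  exact torusIcc_mono e1 e2 (ht j)

lemma dyadicB_subset_innerShell {m : ℕ} (hm : 1 ≤ m) (Ω : Set (Torus m)) (γ : Fin m → ℝ)
    {i : ℕ} (hi : 2 ≤ i) {Γ : Set (Torus m)} (hΓ : Γ ∈ dyadicB Ω γ i) :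
    Γ ⊆ innerShell Ω ((2*(m:ℝ)+2)/2^i) := by
  have hi1 : i ≠ 1 := by omega
  rw [dyadicB, if_neg hi1] at hΓ
  obtain ⟨⟨⟨u, rfl⟩, hΩ⟩, hmax⟩ := hΓ
  have hsubP : gridCube γ (2^i) u ⊆ gridCube γ (2^(i-1)) (fun j => u j / 2) :=
    gridCube_subset_parent (by omega) γ u
  have hP : ¬ gridCube γ (2^(i-1)) (fun j => u j / 2) ⊆ Ω :=
    fun h => hmax _ ⟨⟨fun j => u j / 2, rfl⟩, h⟩ hsubP
  obtain ⟨w, hwP, hwΩ⟩ := Set.not_subset.mp hP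
  intro t ht
  refine ⟨hΩ ht, ?_⟩
  have hm1 : (1:ℝ) ≤ m := by exact_mod_cast hm
  have hpi : (0:ℝ) < 2^i := by positivity
  have hpi1 : (0:ℝ) < 2^(i-1) := by positivity
  have hpow : (2:ℝ)^i = 2^(i-1) * 2 := by
    rw [← pow_succ]; congr 1; omega
  have hL : ∀ j, dist (t j) (w j) ≤ 2/2^i := by
    intro j
    have h1 := hsubP ht j
    have h2 := hwP j
    have h3 := mem_torusIcc_dist_le h1 h2
    have e : (γ j + (((u j / 2 : ℤ) : ℝ) + 1) / ((2^(i-1):ℕ):ℝ)) - (γ j + ((u j / 2 : ℤ) : ℝ) / ((2^(i-1):ℕ):ℝ)) = 2/2^i := by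
      push_cast
      rw [hpow]
      field_simp
      ring
    rw [e] at h3
    exact h3
  have hds : torusDist t w ≤ 2*(m:ℝ)/2^i := by
    rw [torusDist]
    have hsum : ∑ j, dist (t j) (w j)^2 ≤ (m:ℝ) * (2/2^i)^2 := by
      calc ∑ j, dist (t j) (w j)^2 ≤ ∑ _j : Fin m, (2/2^i)^2 :=
            Finset.sum_le_sum (fun j _ => pow_le_pow_left₀ dist_nonneg (hL j) 2)
        _ = (m:ℝ) * (2/2^i)^2 := by
            rw [Finset.sum_const, Finset.card_univ, Fintype.card_fin, nsmul_eq_mul]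
    calc Real.sqrt (∑ j, dist (t j) (w j)^2) ≤ Real.sqrt ((m:ℝ) * (2/2^i)^2) :=
          Real.sqrt_le_sqrt hsum
      _ ≤ Real.sqrt (((m:ℝ) * (2/2^i))^2) := by
          refine Real.sqrt_le_sqrt ?_
          nlinarith [sq_nonneg (2/(2:ℝ)^i)]
      _ = (m:ℝ) * (2/2^i) := Real.sqrt_sq (by positivity)
      _ = 2*(m:ℝ)/2^i := by ring
  have hle : torusDistSet t Ωᶜ ≤ torusDist t w := by
    refine ciInf_le ⟨0, ?_⟩ (Subtype.mk w hwΩ)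
    rintro x ⟨w', rfl⟩
    exact Real.sqrt_nonneg _
  refine lt_of_le_of_lt (hle.trans hds) ?_
  rw [div_lt_div_iff₀ hpi hpi]
  nlinarith [hpi]

lemma dyadicB_subset_cubesIn {m : ℕ} (Ω : Set (Torus m)) (γ : Fin m → ℝ) {i : ℕ} (hi : 1 ≤ i) :
    dyadicB Ω γ i ⊆ cubesIn Ω γ (2^i) := by
  rw [dyadicB]
  split_ifs with h
  · subst h; norm_num
  · exact fun Γ hΓ => hΓ.1

lemma dyadicB_measure_bound {m : ℕ} (hm : 1 ≤ m) (Ω : Set (Torus m)) (γ : Fin m → ℝ)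
    {i : ℕ} (hi : 2 ≤ i) :
    ((dyadicB Ω γ i).ncard : ℝ) * (((2:ℝ)^i)⁻¹)^m
      ≤ tmeas (innerShell Ω ((2*(m:ℝ)+2)/2^i)) := by
  have hone : 1 ≤ 2^i := Nat.one_le_two_pow
  have hfin : (dyadicB Ω γ i).Finite :=
    (cubesIn_finite Ω γ (k := 2^i) (by omega)).subset (dyadicB_subset_cubesIn Ω γ (by omega))
  set s := hfin.toFinset with hs
  have hmem : ∀ Γ ∈ s, Γ ∈ cubesIn Ω γ (2^i) := fun Γ h =>
    dyadicB_subset_cubesIn Ω γ (by omega) (hfin.mem_toFinset.mp h)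
  set q : ℝ := (((2:ℝ)^i)⁻¹)^m with hq
  have hq0 : 0 ≤ q := by positivity
  have hvol : ∀ Γ ∈ s, volume Γ = ENNReal.ofReal q := by
    intro Γ h
    obtain ⟨⟨u, rfl⟩, -⟩ := hmem Γ h
    rw [volume_gridCube γ hone u]
    congr 2
    push_cast
    ring
  have hdisj : (↑s : Set (Set (Torus m))).Pairwise (Function.onFun (MeasureTheory.AEDisjoint volume) id) := by
    intro Γ hΓ Γ' hΓ' hne
    obtain ⟨⟨u, rfl⟩, -⟩ := hmem Γ (by simpa using hΓ)
    obtain ⟨⟨u', rfl⟩, -⟩ := hmem Γ' (by simpa using hΓ')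
    exact gridCube_inter_null γ hone u u' hne
  have hnull : ∀ Γ ∈ s, NullMeasurableSet (id Γ) volume := by
    intro Γ h
    obtain ⟨⟨u, rfl⟩, -⟩ := hmem Γ h
    exact (measurableSet_gridCube γ _ u).nullMeasurableSet
  have hunion := measure_biUnion_finset₀ hdisj hnull
  have hsub : (⋃ Γ ∈ s, id Γ) ⊆ innerShell Ω ((2*(m:ℝ)+2)/2^i) := by
    simp only [Set.iUnion_subset_iff, id]
    intro Γ hΓ
    exact dyadicB_subset_innerShell hm Ω γ hi (hfin.mem_toFinset.mp hΓ)
  have hEN : (s.card : ENNReal) * ENNReal.ofReal q ≤ volume (innerShell Ω ((2*(m:ℝ)+2)/2^i)) := by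
    calc (s.card : ENNReal) * ENNReal.ofReal q = ∑ Γ ∈ s, volume (id Γ) := by
          rw [show (∑ Γ ∈ s, volume (id Γ)) = ∑ _Γ ∈ s, ENNReal.ofReal q from
            Finset.sum_congr rfl (fun Γ h => hvol Γ h), Finset.sum_const, nsmul_eq_mul]
      _ = volume (⋃ Γ ∈ s, id Γ) := hunion.symm
      _ ≤ _ := measure_mono hsub
  have hfin2 : volume (innerShell Ω ((2*(m:ℝ)+2)/2^i)) ≠ ⊤ := (measure_lt_top _ _).ne
  have h2 := ENNReal.toReal_mono hfin2 hEN
  rw [ENNReal.toReal_mul, ENNReal.toReal_ofReal hq0] at h2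
  rw [ENNReal.toReal_natCast] at h2
  rw [Set.ncard_eq_toFinset_card _ hfin]
  exact h2

/-- Dyadic cube decomposition of a very well shaped set:
`#B_i ≤ c (1 + μ(Ω)^{(m−1)/m} 2^{i(m−1)})` with `c = c(m,C)`. -/
theorem dyadicB_card_very_well_shaped (m : ℕ) (hm : 1 ≤ m) (C : ℝ) :
    ∃ c : ℝ, 0 < c ∧
      ∀ Ω : Set (Torus m), IsVeryWellShaped Ω C → ∀ γ : Fin m → ℝ, ∀ i : ℕ, 1 ≤ i →
        ((dyadicB Ω γ i).ncard : ℝ)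
          ≤ c * (1 + tmeas Ω ^ (((m : ℝ) - 1) / (m : ℝ)) * 2 ^ (i * (m - 1))) := by
  refine ⟨(|C|+1) * (2*(m:ℝ)+2)^m + 2^m, by positivity, ?_⟩
  intro Ω hΩ γ i hi
  set c : ℝ := (|C|+1) * (2*(m:ℝ)+2)^m + 2^m with hc
  have hm1 : (1:ℝ) ≤ m := by exact_mod_cast hm
  set μ : ℝ := tmeas Ω ^ (((m : ℝ) - 1) / (m : ℝ)) with hμdef
  have hμ0 : 0 ≤ μ := Real.rpow_nonneg (ENNReal.toReal_nonneg) _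
  have hX0 : (0:ℝ) ≤ 2 ^ (i * (m - 1)) := by positivity
  have hc0 : (0:ℝ) < c := by positivity
  rcases eq_or_lt_of_le hi with h1 | h2
  · -- i = 1
    have hB : dyadicB Ω γ 1 = cubesIn Ω γ 2 := by rw [dyadicB, if_pos rfl]
    rw [← h1, hB]
    have hcard : ((cubesIn Ω γ 2).ncard : ℝ) ≤ 2^m := by
      exact_mod_cast cubesIn_ncard_le Ω γ (by norm_num)
    have hx : (0:ℝ) ≤ μ * 2 ^ (1 * (m - 1)) := by positivity
    have hcx : (0:ℝ) ≤ c * (μ * 2 ^ (1 * (m - 1))) := mul_nonneg hc0.le hx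
    have hA : (0:ℝ) < (|C|+1) * (2*(m:ℝ)+2)^m := by positivity
    nlinarith [hcard, hcx, hA]
  · -- i ≥ 2
    have hi2 : 2 ≤ i := h2
    set ε : ℝ := (2*(m:ℝ)+2)/2^i with hε
    have hεpos : 0 < ε := by positivity
    have hkey := dyadicB_measure_bound hm Ω γ hi2
    have hws := (hΩ ε hεpos).2
    have hexp : (1 : ℝ) - 1/(m:ℝ) = ((m:ℝ)-1)/(m:ℝ) := by
      field_simp
    rw [hexp] at hws
    have hP : (0:ℝ) < (2:ℝ)^(i*m) := by positivity
    have hqP : (((2:ℝ)^i)⁻¹)^m * (2:ℝ)^(i*m) = 1 := by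
      rw [inv_pow, ← pow_mul]
      field_simp
    have hiNat : i * m = i + i * (m - 1) := by
      have hmm : m - 1 + 1 = m := by omega
      conv_lhs => rw [← hmm]
      rw [Nat.mul_add, Nat.mul_one, Nat.add_comm]
    have heP : ε * (2:ℝ)^(i*m) = (2*(m:ℝ)+2) * 2^(i*(m-1)) := by
      rw [hiNat, pow_add, hε]
      field_simp
    have hePm : ε^m * (2:ℝ)^(i*m) = (2*(m:ℝ)+2)^m := by
      rw [hε, div_pow, pow_mul]
      field_simp
    have hcard : ((dyadicB Ω γ i).ncard : ℝ)
        ≤ (C * (μ * ε + ε^m)) * (2:ℝ)^(i*m) := by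
      have h3 : ((dyadicB Ω γ i).ncard : ℝ) * ((((2:ℝ)^i)⁻¹)^m * (2:ℝ)^(i*m))
          ≤ (C * (μ * ε + ε^m)) * (2:ℝ)^(i*m) := by
        rw [← mul_assoc]
        exact mul_le_mul_of_nonneg_right (hkey.trans hws) hP.le
      rwa [hqP, mul_one] at h3
    have hexpand : (C * (μ * ε + ε^m)) * (2:ℝ)^(i*m)
        = C * μ * (ε * (2:ℝ)^(i*m)) + C * (ε^m * (2:ℝ)^(i*m)) := by ring
    rw [hexpand, heP, hePm] at hcard
    refine hcard.trans ?_
    have hC1 : C * (2*(m:ℝ)+2) ≤ c := by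
      have h4 : (2*(m:ℝ)+2) ≤ (2*(m:ℝ)+2)^m :=
        le_self_pow₀ (by linarith) (by omega)
      have h5 : C * (2*(m:ℝ)+2) ≤ |C| * (2*(m:ℝ)+2)^m := by
        calc C * (2*(m:ℝ)+2) ≤ |C| * (2*(m:ℝ)+2) :=
              mul_le_mul_of_nonneg_right (le_abs_self C) (by linarith)
          _ ≤ |C| * (2*(m:ℝ)+2)^m := mul_le_mul_of_nonneg_left h4 (abs_nonneg C)
      rw [hc]
      nlinarith [pow_pos (show (0:ℝ) < 2*(m:ℝ)+2 by positivity) m,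
        pow_pos (show (0:ℝ) < (2:ℝ) by norm_num) m]
    have hC2 : C * (2*(m:ℝ)+2)^m ≤ c := by
      have h5 : C * (2*(m:ℝ)+2)^m ≤ |C| * (2*(m:ℝ)+2)^m :=
        mul_le_mul_of_nonneg_right (le_abs_self C) (by positivity)
      rw [hc]
      nlinarith [pow_pos (show (0:ℝ) < 2*(m:ℝ)+2 by positivity) m,
        pow_pos (show (0:ℝ) < (2:ℝ) by norm_num) m]
    nlinarith [mul_nonneg (mul_nonneg (sub_nonneg.mpr hC1) hμ0) hX0]
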